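/- Let U ⊆ ℂ be open and f : U → ℂ holomorphic. Define ψ : U → ℂ by ψ(z) = 2f(z)/(1 + |f(z)|²). Then for every z ∈ U one has Δψ(z) = −(8|f′(z)|²/(1 + |f(z)|²)²)·ψ(z), where Δ acts componentwise on the real and imaginary parts of ψ. Consequently the real-valued functions Re ψ and Im ψ each satisfy Δφ = −(8|f′|²/(1+|f|²)²)·φ, i.e. they are eigenfunctions with eigenvalue 2 of Δ_g = −((1+|f|²)²/(4|f′|²))Δ wherever f′ ≠ 0. -/

import Mathlib

/-- The Euclidean Laplacian `Δ = ∂²/∂x² + ∂²/∂y²` of a real-valued function on `ℂ ≃ ℝ²`. -/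
noncomputable def lapR (φ : ℂ → ℝ) (z : ℂ) : ℝ :=
  fderiv ℝ (fun w => fderiv ℝ φ w 1) z 1 +
  fderiv ℝ (fun w => fderiv ℝ φ w Complex.I) z Complex.I

/-- The Euclidean Laplacian acting componentwise on a complex-valued function on `ℂ ≃ ℝ²`. -/
noncomputable def lapC (φ : ℂ → ℂ) (z : ℂ) : ℂ :=
  fderiv ℝ (fun w => fderiv ℝ φ w 1) z 1 +
  fderiv ℝ (fun w => fderiv ℝ φ w Complex.I) z Complex.I

open Complex

lemma hd_line {f : ℂ → ℂ} {w : ℂ} (h : DifferentiableAt ℂ f w) (v : ℂ) :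
    HasDerivAt (fun t : ℝ => f (w + t • v)) (deriv f w * v) 0 := by
  have hγ : HasDerivAt (fun t : ℝ => w + t • v) v 0 := by
    simpa using ((hasDerivAt_id (0 : ℝ)).smul_const v).const_add w
  have hf' : HasFDerivAt f (((1 : ℂ →L[ℂ] ℂ).smulRight (deriv f w)).restrictScalars ℝ)
      ((fun t : ℝ => w + t • v) 0) := by
    simpa [ContinuousLinearMap.smulRight_one_eq_toSpanSingleton] using (h.hasDerivAt.hasFDerivAt).restrictScalars ℝ
  have := hf'.comp_hasDerivAt 0 hγ
  simpa [Function.comp_def, mul_comm] using this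

lemma hd_line_conj {f : ℂ → ℂ} {w : ℂ} (h : DifferentiableAt ℂ f w) (v : ℂ) :
    HasDerivAt (fun t : ℝ => starRingEnd ℂ (f (w + t • v))) (starRingEnd ℂ (deriv f w * v)) 0 := by
  have h1 := hd_line h v
  have h2 : HasFDerivAt (fun z : ℂ => starRingEnd ℂ z) (conjCLE.toContinuousLinearMap)
      ((fun t : ℝ => f (w + t • v)) 0) := conjCLE.toContinuousLinearMap.hasFDerivAt
  have := h2.comp_hasDerivAt 0 h1
  simpa [Function.comp_def] using this

lemma den_ne {f : ℂ → ℂ} (w : ℂ) : (1 : ℂ) + f w * starRingEnd ℂ (f w) ≠ 0 := by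
  rw [Complex.mul_conj]
  have h1 : (0:ℝ) < 1 + Complex.normSq (f w) := by
    have := Complex.normSq_nonneg (f w); linarith
  intro h
  have := congrArg Complex.re h
  simp at this
  linarith

lemma den_cast {f : ℂ → ℂ} (w : ℂ) :
    ((1 + ‖f w‖ ^ 2 : ℝ) : ℂ) = 1 + f w * starRingEnd ℂ (f w) := by
  rw [Complex.mul_conj]
  push_cast [Complex.sq_norm]
  norm_num

lemma hd_inv {g : ℝ → ℂ} {g' : ℂ} (h : HasDerivAt g g' 0) (h0 : g 0 ≠ 0) :
    HasDerivAt (fun t => (g t)⁻¹) (-(((g 0) ^ 2)⁻¹) * g') 0 := by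
  have h2 : HasFDerivAt Inv.inv (-(ContinuousLinearMap.mulLeftRight ℝ ℂ (g 0)⁻¹ (g 0)⁻¹)) (g 0) :=
    hasFDerivAt_inv' h0
  have h3 := h2.comp_hasDerivAt 0 h
  have h4 : HasDerivAt (fun t => (g t)⁻¹) (-((g 0)⁻¹ * g' * (g 0)⁻¹)) 0 := by
    simpa [Function.comp_def] using h3
  convert h4 using 1
  rw [sq, mul_inv]
  ring

lemma diff_den {f : ℂ → ℂ} {w : ℂ} (h : DifferentiableAt ℂ f w) :
    DifferentiableAt ℝ (fun x => (1 : ℂ) + f x * starRingEnd ℂ (f x)) w := by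
  have hfR := h.restrictScalars ℝ
  exact (differentiableAt_const _).add (hfR.mul hfR.star)

lemma diff_psi {f : ℂ → ℂ} {w : ℂ} (h : DifferentiableAt ℂ f w) :
    DifferentiableAt ℝ (fun x => 2 * f x * (1 + f x * starRingEnd ℂ (f x))⁻¹) w := by
  have hfR := h.restrictScalars ℝ
  exact ((differentiableAt_const _).mul hfR).mul ((diff_den h).inv (den_ne w))

lemma fd1 {f : ℂ → ℂ} {w : ℂ} (h : DifferentiableAt ℂ f w) (v : ℂ) :
    fderiv ℝ (fun x => 2 * f x * (1 + f x * starRingEnd ℂ (f x))⁻¹) w v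
      = 2 * (deriv f w * v) * (1 + f w * starRingEnd ℂ (f w))⁻¹
        + 2 * f w * (-(deriv f w * v * starRingEnd ℂ (f w) + f w * starRingEnd ℂ (deriv f w * v))
            / (1 + f w * starRingEnd ℂ (f w)) ^ 2) := by
  have hγ : HasDerivAt (fun t : ℝ => w + t • v) v 0 := by
    simpa using ((hasDerivAt_id (0 : ℝ)).smul_const v).const_add w
  have hA := hd_line h v
  have hB := hd_line_conj h v
  have hden : HasDerivAt (fun t : ℝ => (1 : ℂ) + f (w + t • v) * starRingEnd ℂ (f (w + t • v)))
      (deriv f w * v * starRingEnd ℂ (f w) + f w * starRingEnd ℂ (deriv f w * v)) 0 := by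
    simpa using (hA.mul hB).const_add 1
  have hden0 : (fun t : ℝ => (1 : ℂ) + f (w + t • v) * starRingEnd ℂ (f (w + t • v))) 0 ≠ 0 := by
    simpa using den_ne (f := f) w
  have hinv := hd_inv hden hden0
  have hnum := hA.const_mul (2 : ℂ)
  have hfull := hnum.mul hinv
  have hψ : HasDerivAt (fun t : ℝ => 2 * f (w + t • v) * (1 + f (w + t • v) * starRingEnd ℂ (f (w + t • v)))⁻¹)
      (fderiv ℝ (fun x => 2 * f x * (1 + f x * starRingEnd ℂ (f x))⁻¹) w v) 0 := by
    have hd := (diff_psi h).hasFDerivAt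
    have hd' : HasFDerivAt (fun x => 2 * f x * (1 + f x * starRingEnd ℂ (f x))⁻¹)
        (fderiv ℝ (fun x => 2 * f x * (1 + f x * starRingEnd ℂ (f x))⁻¹) w) ((fun t : ℝ => w + t • v) 0) := by
      simpa using hd
    simpa [Function.comp_def] using hd'.comp_hasDerivAt 0 hγ
  have := hψ.unique hfull
  simp only [zero_smul, add_zero] at this
  rw [this]
  ring

lemma hd_conj {g : ℝ → ℂ} {g' : ℂ} (h : HasDerivAt g g' 0) :
    HasDerivAt (fun t => starRingEnd ℂ (g t)) (starRingEnd ℂ g') 0 := by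
  have h2 : HasFDerivAt (fun z : ℂ => starRingEnd ℂ z) (conjCLE.toContinuousLinearMap) (g 0) :=
    conjCLE.toContinuousLinearMap.hasFDerivAt
  simpa [Function.comp_def] using h2.comp_hasDerivAt 0 h

lemma diff_G {f : ℂ → ℂ} {z : ℂ} (h : DifferentiableAt ℂ f z) (hc : DifferentiableAt ℂ (deriv f) z)
    (v : ℂ) :
    DifferentiableAt ℝ (fun x => 2 * (deriv f x * v) * (1 + f x * starRingEnd ℂ (f x))⁻¹
        + 2 * f x * (-(deriv f x * v * starRingEnd ℂ (f x) + f x * starRingEnd ℂ (deriv f x * v))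
            / (1 + f x * starRingEnd ℂ (f x)) ^ 2)) z := by
  have hfR := h.restrictScalars ℝ
  have hcR := hc.restrictScalars ℝ
  have hden := diff_den h
  have h1 : DifferentiableAt ℝ (fun x => deriv f x * v) z := hcR.mul_const v
  have h2 : DifferentiableAt ℝ (fun x => starRingEnd ℂ (deriv f x * v)) z := h1.star
  have h3 : DifferentiableAt ℝ (fun x => starRingEnd ℂ (f x)) z := hfR.star
  have hnum : DifferentiableAt ℝ
      (fun x => -(deriv f x * v * starRingEnd ℂ (f x) + f x * starRingEnd ℂ (deriv f x * v))) z :=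
    ((h1.mul h3).add (hfR.mul h2)).neg
  have hsq : DifferentiableAt ℝ (fun x => ((1 : ℂ) + f x * starRingEnd ℂ (f x)) ^ 2) z := hden.pow 2
  have hsq0 : ((1 : ℂ) + f z * starRingEnd ℂ (f z)) ^ 2 ≠ 0 := pow_ne_zero 2 (den_ne z)
  have hq : DifferentiableAt ℝ
      (fun x => -(deriv f x * v * starRingEnd ℂ (f x) + f x * starRingEnd ℂ (deriv f x * v))
        / (1 + f x * starRingEnd ℂ (f x)) ^ 2) z := by
    simpa only [div_eq_mul_inv, Pi.mul_def, Pi.inv_def] using hnum.mul (hsq.inv hsq0)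
  exact (((differentiableAt_const (2:ℂ)).mul h1).mul (hden.inv (den_ne z))).add
    (((differentiableAt_const (2:ℂ)).mul hfR).mul hq)

set_option maxHeartbeats 2000000 in
lemma fd2 {f : ℂ → ℂ} {z : ℂ} (h : DifferentiableAt ℂ f z) (hc : DifferentiableAt ℂ (deriv f) z)
    (v : ℂ) :
    fderiv ℝ (fun x => 2 * (deriv f x * v) * (1 + f x * starRingEnd ℂ (f x))⁻¹
        + 2 * f x * (-(deriv f x * v * starRingEnd ℂ (f x) + f x * starRingEnd ℂ (deriv f x * v))
            / (1 + f x * starRingEnd ℂ (f x)) ^ 2)) z v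
      = 2 * (deriv (deriv f) z * v * v) * (1 + f z * starRingEnd ℂ (f z))⁻¹
        - 4 * (deriv f z * v) * (deriv f z * v * starRingEnd ℂ (f z)
            + f z * starRingEnd ℂ (deriv f z * v)) / (1 + f z * starRingEnd ℂ (f z)) ^ 2
        + 4 * f z * (deriv f z * v * starRingEnd ℂ (f z)
            + f z * starRingEnd ℂ (deriv f z * v)) ^ 2 / (1 + f z * starRingEnd ℂ (f z)) ^ 3
        - 2 * f z * (deriv (deriv f) z * v * v * starRingEnd ℂ (f z)
            + 2 * (deriv f z * v) * starRingEnd ℂ (deriv f z * v)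
            + f z * starRingEnd ℂ (deriv (deriv f) z * v * v))
            / (1 + f z * starRingEnd ℂ (f z)) ^ 2 := by
  have hγ : HasDerivAt (fun t : ℝ => z + t • v) v 0 := by
    simpa using ((hasDerivAt_id (0 : ℝ)).smul_const v).const_add z
  have hA := hd_line h v
  have hB := hd_line_conj h v
  have hC := hd_line hc v
  have hden : HasDerivAt (fun t : ℝ => (1 : ℂ) + f (z + t • v) * starRingEnd ℂ (f (z + t • v)))
      (deriv f z * v * starRingEnd ℂ (f z) + f z * starRingEnd ℂ (deriv f z * v)) 0 := by
    simpa using (hA.mul hB).const_add 1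
  have hden0 : (fun t : ℝ => (1 : ℂ) + f (z + t • v) * starRingEnd ℂ (f (z + t • v))) 0 ≠ 0 := by
    simpa using den_ne (f := f) z
  have hinv := hd_inv hden hden0
  have hCv : HasDerivAt (fun t : ℝ => deriv f (z + t • v) * v) (deriv (deriv f) z * v * v) 0 :=
    hC.mul_const v
  have hDv : HasDerivAt (fun t : ℝ => starRingEnd ℂ (deriv f (z + t • v) * v))
      (starRingEnd ℂ (deriv (deriv f) z * v * v)) 0 := hd_conj hCv
  have hS := (hCv.mul hB).add (hA.mul hDv)
  have hsq : HasDerivAt (fun t : ℝ => ((1 : ℂ) + f (z + t • v) * starRingEnd ℂ (f (z + t • v))) ^ 2)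
      ((deriv f z * v * starRingEnd ℂ (f z) + f z * starRingEnd ℂ (deriv f z * v))
          * ((1 : ℂ) + f z * starRingEnd ℂ (f z))
        + ((1 : ℂ) + f z * starRingEnd ℂ (f z))
          * (deriv f z * v * starRingEnd ℂ (f z) + f z * starRingEnd ℂ (deriv f z * v))) 0 := by
    simpa only [pow_two, zero_smul, add_zero, Pi.mul_def] using hden.mul hden
  have hsq0 : ((fun t : ℝ => (1 : ℂ) + f (z + t • v) * starRingEnd ℂ (f (z + t • v))) 0) ^ 2 ≠ 0 :=
    pow_ne_zero 2 hden0
  have hdiv : HasDerivAt (fun t : ℝ =>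
      -(deriv f (z + t • v) * v * starRingEnd ℂ (f (z + t • v))
          + f (z + t • v) * starRingEnd ℂ (deriv f (z + t • v) * v))
        / (1 + f (z + t • v) * starRingEnd ℂ (f (z + t • v))) ^ 2) _ 0 := hS.neg.div hsq hsq0
  have hfull := (((hC.mul_const v).const_mul 2).mul hinv).add ((hA.const_mul 2).mul hdiv)
  have hG : HasDerivAt (fun t : ℝ =>
      2 * (deriv f (z + t • v) * v) * (1 + f (z + t • v) * starRingEnd ℂ (f (z + t • v)))⁻¹
        + 2 * f (z + t • v) * (-(deriv f (z + t • v) * v * starRingEnd ℂ (f (z + t • v))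
            + f (z + t • v) * starRingEnd ℂ (deriv f (z + t • v) * v))
            / (1 + f (z + t • v) * starRingEnd ℂ (f (z + t • v))) ^ 2))
      (fderiv ℝ (fun x => 2 * (deriv f x * v) * (1 + f x * starRingEnd ℂ (f x))⁻¹
        + 2 * f x * (-(deriv f x * v * starRingEnd ℂ (f x) + f x * starRingEnd ℂ (deriv f x * v))
            / (1 + f x * starRingEnd ℂ (f x)) ^ 2)) z v) 0 := by
    have hd' : HasFDerivAt (fun x => 2 * (deriv f x * v) * (1 + f x * starRingEnd ℂ (f x))⁻¹
        + 2 * f x * (-(deriv f x * v * starRingEnd ℂ (f x) + f x * starRingEnd ℂ (deriv f x * v))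
            / (1 + f x * starRingEnd ℂ (f x)) ^ 2))
        (fderiv ℝ (fun x => 2 * (deriv f x * v) * (1 + f x * starRingEnd ℂ (f x))⁻¹
        + 2 * f x * (-(deriv f x * v * starRingEnd ℂ (f x) + f x * starRingEnd ℂ (deriv f x * v))
            / (1 + f x * starRingEnd ℂ (f x)) ^ 2)) z) ((fun t : ℝ => z + t • v) 0) := by
      simpa using (diff_G h hc v).hasFDerivAt
    simpa [Function.comp_def] using hd'.comp_hasDerivAt 0 hγ
  have heq := hG.unique hfull
  simp only [zero_smul, add_zero, Pi.mul_apply, Pi.add_apply, Pi.neg_apply] at heq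
  rw [heq]
  have hd0 : (1 : ℂ) + f z * starRingEnd ℂ (f z) ≠ 0 := den_ne z
  set a := f z
  set b := starRingEnd ℂ (f z)
  set p := deriv f z
  set q := starRingEnd ℂ (deriv f z)
  set r := deriv (deriv f) z
  simp only [map_mul]
  set u := starRingEnd ℂ v with hu
  set d : ℂ := 1 + a * b with hd
  clear_value d
  have hd8 : (d : ℂ)⁻¹ ^ 8 * d ^ 8 = 1 := by
    rw [inv_pow]; exact inv_mul_cancel₀ (pow_ne_zero 8 hd0)
  field_simp
  ring

lemma lapC_formula (f : ℂ → ℂ) (U : Set ℂ) (hU : IsOpen U) (hf : DifferentiableOn ℂ f U)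
    (z : ℂ) (hz : z ∈ U) :
    lapC (fun w => 2 * f w * (1 + f w * starRingEnd ℂ (f w))⁻¹) z
      = -16 * f z * (deriv f z * starRingEnd ℂ (deriv f z))
          / (1 + f z * starRingEnd ℂ (f z)) ^ 3 := by
  have h : DifferentiableAt ℂ f z := hf.differentiableAt (hU.mem_nhds hz)
  have hc : DifferentiableAt ℂ (deriv f) z := ((hf.analyticOnNhd hU).deriv z hz).differentiableAt
  have hev : ∀ v : ℂ, (fun w => fderiv ℝ (fun x => 2 * f x * (1 + f x * starRingEnd ℂ (f x))⁻¹) w v)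
      =ᶠ[nhds z] (fun w => 2 * (deriv f w * v) * (1 + f w * starRingEnd ℂ (f w))⁻¹
        + 2 * f w * (-(deriv f w * v * starRingEnd ℂ (f w) + f w * starRingEnd ℂ (deriv f w * v))
            / (1 + f w * starRingEnd ℂ (f w)) ^ 2)) := by
    intro v
    filter_upwards [hU.mem_nhds hz] with w hw
    exact fd1 (hf.differentiableAt (hU.mem_nhds hw)) v
  have hder : ∀ v : ℂ,
      fderiv ℝ (fun w => fderiv ℝ (fun x => 2 * f x * (1 + f x * starRingEnd ℂ (f x))⁻¹) w v) z
        = fderiv ℝ (fun w => 2 * (deriv f w * v) * (1 + f w * starRingEnd ℂ (f w))⁻¹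
        + 2 * f w * (-(deriv f w * v * starRingEnd ℂ (f w) + f w * starRingEnd ℂ (deriv f w * v))
            / (1 + f w * starRingEnd ℂ (f w)) ^ 2)) z := fun v => (hev v).fderiv_eq
  unfold lapC
  rw [hder 1, hder Complex.I]
  rw [fd2 h hc 1, fd2 h hc Complex.I]
  have hd0 : (1 : ℂ) + f z * starRingEnd ℂ (f z) ≠ 0 := den_ne z
  simp only [map_mul, Complex.conj_I, map_one, mul_one]
  set a := f z
  set b := starRingEnd ℂ (f z)
  set p := deriv f z
  set q := starRingEnd ℂ (deriv f z)
  set r := deriv (deriv f) z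
  set s := starRingEnd ℂ (deriv (deriv f) z)
  set d : ℂ := 1 + a * b with hd
  clear_value d
  have hd8 : (d : ℂ)⁻¹ ^ 8 * d ^ 8 = 1 := by
    rw [inv_pow]; exact inv_mul_cancel₀ (pow_ne_zero 8 hd0)
  field_simp
  ring_nf
  simp only [Complex.I_sq]
  ring_nf
  linear_combination (-16 * a * p * q) * hd

lemma lap_comp (T : ℂ →L[ℝ] ℝ) (ψ : ℂ → ℂ) (z : ℂ)
    (hev : ∀ᶠ w in nhds z, DifferentiableAt ℝ ψ w)
    (h1 : DifferentiableAt ℝ (fun w => fderiv ℝ ψ w 1) z)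
    (hI : DifferentiableAt ℝ (fun w => fderiv ℝ ψ w Complex.I) z) :
    lapR (fun w => T (ψ w)) z = T (lapC ψ z) := by
  have key : ∀ v : ℂ, DifferentiableAt ℝ (fun w => fderiv ℝ ψ w v) z →
      fderiv ℝ (fun w => fderiv ℝ (fun x => T (ψ x)) w v) z v
        = T (fderiv ℝ (fun w => fderiv ℝ ψ w v) z v) := by
    intro v hv
    have e1 : (fun w => fderiv ℝ (fun x => T (ψ x)) w v) =ᶠ[nhds z]
        fun w => T (fderiv ℝ ψ w v) := by
      filter_upwards [hev] with w hw
      have h2 : fderiv ℝ (fun x => T (ψ x)) w = T.comp (fderiv ℝ ψ w) :=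
        (T.hasFDerivAt.comp w hw.hasFDerivAt).fderiv
      rw [h2]; rfl
    rw [e1.fderiv_eq]
    have h3 : fderiv ℝ (fun w => T (fderiv ℝ ψ w v)) z
        = T.comp (fderiv ℝ (fun w => fderiv ℝ ψ w v) z) :=
      (T.hasFDerivAt.comp z hv.hasFDerivAt).fderiv
    rw [h3]; rfl
  unfold lapR lapC
  rw [key 1 h1, key Complex.I hI, map_add]

lemma diff_inner (f : ℂ → ℂ) (U : Set ℂ) (hU : IsOpen U) (hf : DifferentiableOn ℂ f U)
    (z : ℂ) (hz : z ∈ U) (v : ℂ) :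
    DifferentiableAt ℝ
      (fun w => fderiv ℝ (fun x => 2 * f x * (1 + f x * starRingEnd ℂ (f x))⁻¹) w v) z := by
  have h : DifferentiableAt ℂ f z := hf.differentiableAt (hU.mem_nhds hz)
  have hc : DifferentiableAt ℂ (deriv f) z := ((hf.analyticOnNhd hU).deriv z hz).differentiableAt
  have hev : (fun w => fderiv ℝ (fun x => 2 * f x * (1 + f x * starRingEnd ℂ (f x))⁻¹) w v)
      =ᶠ[nhds z] (fun w => 2 * (deriv f w * v) * (1 + f w * starRingEnd ℂ (f w))⁻¹
        + 2 * f w * (-(deriv f w * v * starRingEnd ℂ (f w) + f w * starRingEnd ℂ (deriv f w * v))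
            / (1 + f w * starRingEnd ℂ (f w)) ^ 2)) := by
    filter_upwards [hU.mem_nhds hz] with w hw
    exact fd1 (hf.differentiableAt (hU.mem_nhds hw)) v
  exact (diff_G h hc v).congr_of_eventuallyEq hev

lemma absq_cast (u : ℂ) : ((‖u‖ ^ 2 : ℝ) : ℂ) = u * starRingEnd ℂ u := by
  rw [Complex.sq_norm]; exact (Complex.mul_conj u).symm

/-- For `f` holomorphic on an open `U ⊆ ℂ`, the function
`ψ = 2f/(1 + |f|²)` satisfies `Δψ = -(8|f′|²/(1+|f|²)²)·ψ` (componentwise), hence `Re ψ` and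
`Im ψ` satisfy the same equation and are eigenfunctions with eigenvalue `2` of
`Δ_g = -((1+|f|²)²/(4|f′|²))·Δ` wherever `f′ ≠ 0`. -/
theorem stmt_1 (U : Set ℂ) (hU : IsOpen U) (f : ℂ → ℂ)
    (hf : DifferentiableOn ℂ f U) :
    (∀ z ∈ U,
      lapC (fun w => 2 * f w / ((1 + ‖f w‖ ^ 2 : ℝ) : ℂ)) z
        = -((8 * ‖deriv f z‖ ^ 2 / (1 + ‖f z‖ ^ 2) ^ 2 : ℝ) : ℂ) *
            (2 * f z / ((1 + ‖f z‖ ^ 2 : ℝ) : ℂ))) ∧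
    (∀ z ∈ U,
      lapR (fun w => (2 * f w / ((1 + ‖f w‖ ^ 2 : ℝ) : ℂ)).re) z
        = -(8 * ‖deriv f z‖ ^ 2 / (1 + ‖f z‖ ^ 2) ^ 2) *
            (2 * f z / ((1 + ‖f z‖ ^ 2 : ℝ) : ℂ)).re ∧
      lapR (fun w => (2 * f w / ((1 + ‖f w‖ ^ 2 : ℝ) : ℂ)).im) z
        = -(8 * ‖deriv f z‖ ^ 2 / (1 + ‖f z‖ ^ 2) ^ 2) *
            (2 * f z / ((1 + ‖f z‖ ^ 2 : ℝ) : ℂ)).im) ∧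
    (∀ z ∈ U, deriv f z ≠ 0 →
      -((1 + ‖f z‖ ^ 2) ^ 2 / (4 * ‖deriv f z‖ ^ 2)) *
          lapR (fun w => (2 * f w / ((1 + ‖f w‖ ^ 2 : ℝ) : ℂ)).re) z
        = 2 * (2 * f z / ((1 + ‖f z‖ ^ 2 : ℝ) : ℂ)).re ∧
      -((1 + ‖f z‖ ^ 2) ^ 2 / (4 * ‖deriv f z‖ ^ 2)) *
          lapR (fun w => (2 * f w / ((1 + ‖f w‖ ^ 2 : ℝ) : ℂ)).im) z
        = 2 * (2 * f z / ((1 + ‖f z‖ ^ 2 : ℝ) : ℂ)).im) := by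
  have hψeq : ∀ w : ℂ, 2 * f w / ((1 + ‖f w‖ ^ 2 : ℝ) : ℂ)
      = 2 * f w * (1 + f w * starRingEnd ℂ (f w))⁻¹ := fun w => by
    rw [den_cast, div_eq_mul_inv]
  have hfun : (fun w => 2 * f w / ((1 + ‖f w‖ ^ 2 : ℝ) : ℂ))
      = fun w => 2 * f w * (1 + f w * starRingEnd ℂ (f w))⁻¹ := funext hψeq
  have hcast : ∀ z : ℂ, ((8 * ‖deriv f z‖ ^ 2 / (1 + ‖f z‖ ^ 2) ^ 2 : ℝ) : ℂ)
      = 8 * (deriv f z * starRingEnd ℂ (deriv f z)) / (1 + f z * starRingEnd ℂ (f z)) ^ 2 := by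
    intro z
    rw [Complex.ofReal_div, Complex.ofReal_mul, absq_cast, Complex.ofReal_pow, den_cast]
    norm_num
  have part1 : ∀ z ∈ U,
      lapC (fun w => 2 * f w / ((1 + ‖f w‖ ^ 2 : ℝ) : ℂ)) z
        = -((8 * ‖deriv f z‖ ^ 2 / (1 + ‖f z‖ ^ 2) ^ 2 : ℝ) : ℂ) *
            (2 * f z / ((1 + ‖f z‖ ^ 2 : ℝ) : ℂ)) := by
    intro z hz
    rw [hfun, lapC_formula f U hU hf z hz, hψeq, hcast]
    have hd0 : (1 : ℂ) + f z * starRingEnd ℂ (f z) ≠ 0 := den_ne z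
    field_simp
    ring
  have part2 : ∀ z ∈ U,
      lapR (fun w => (2 * f w / ((1 + ‖f w‖ ^ 2 : ℝ) : ℂ)).re) z
        = -(8 * ‖deriv f z‖ ^ 2 / (1 + ‖f z‖ ^ 2) ^ 2) *
            (2 * f z / ((1 + ‖f z‖ ^ 2 : ℝ) : ℂ)).re ∧
      lapR (fun w => (2 * f w / ((1 + ‖f w‖ ^ 2 : ℝ) : ℂ)).im) z
        = -(8 * ‖deriv f z‖ ^ 2 / (1 + ‖f z‖ ^ 2) ^ 2) *
            (2 * f z / ((1 + ‖f z‖ ^ 2 : ℝ) : ℂ)).im := by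
    intro z hz
    have hev : ∀ᶠ w in nhds z, DifferentiableAt ℝ
        (fun x => 2 * f x * (1 + f x * starRingEnd ℂ (f x))⁻¹) w := by
      filter_upwards [hU.mem_nhds hz] with w hw
      exact diff_psi (hf.differentiableAt (hU.mem_nhds hw))
    have h1 := diff_inner f U hU hf z hz 1
    have hI := diff_inner f U hU hf z hz Complex.I
    have hlap := part1 z hz
    rw [hfun] at hlap
    constructor
    · have e : (fun w => (2 * f w / ((1 + ‖f w‖ ^ 2 : ℝ) : ℂ)).re)
          = fun w => Complex.reCLM (2 * f w * (1 + f w * starRingEnd ℂ (f w))⁻¹) :=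
        funext fun w => by rw [hψeq w]; rfl
      rw [e, lap_comp Complex.reCLM _ z hev h1 hI, hlap]
      simp only [Complex.reCLM_apply]
      rw [← Complex.ofReal_neg, Complex.re_ofReal_mul]
    · have e : (fun w => (2 * f w / ((1 + ‖f w‖ ^ 2 : ℝ) : ℂ)).im)
          = fun w => Complex.imCLM (2 * f w * (1 + f w * starRingEnd ℂ (f w))⁻¹) :=
        funext fun w => by rw [hψeq w]; rfl
      rw [e, lap_comp Complex.imCLM _ z hev h1 hI, hlap]
      simp only [Complex.imCLM_apply]
      rw [← Complex.ofReal_neg, Complex.im_ofReal_mul]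
  refine ⟨part1, part2, ?_⟩
  intro z hz hp
  obtain ⟨hre, him⟩ := part2 z hz
  have habs : ‖deriv f z‖ ≠ 0 := by
    simpa using hp
  have hpos : (0:ℝ) < 1 + ‖f z‖ ^ 2 := by positivity
  constructor
  · rw [hre]; field_simp; ring
  · rw [him]; field_simp; ring
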